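/- arXiv:1505.00770 — 4 statements merged into one kernel-verified Lean document; each statement's English description precedes it below -/
import Mathlib

section
/- Let Δ : A → A be a weak-2-local derivation on a unital C*-algebra A. Then for each projection p ∈ A, each a ∈ A, and each λ ∈ ℂ, one has Δ(a + λp) = Δ(a - λ(1-p)). -/
variable {A : Type*} [NormedRing A] [StarRing A] [CStarRing A] [NormedAlgebra ℂ A]
  [CompleteSpace A] [StarModule ℂ A]

/-- A (bounded linear) derivation on `A`. -/
def IsDerivationCLM (D : A →L[ℂ] A) : Prop := ∀ x y, D (x * y) = D x * y + x * D y

/-- A (non-necessarily linear) weak-2-local derivation on the C*-algebra `A`. -/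
def IsWeak2LocalDerivation (Δ : A → A) : Prop :=
  ∀ a b : A, ∀ φ : A →L[ℂ] ℂ, ∃ D : A →L[ℂ] A,
    IsDerivationCLM D ∧ φ (Δ a) = φ (D a) ∧ φ (Δ b) = φ (D b)

lemma derivationCLM_one (D : A →L[ℂ] A) (hD : IsDerivationCLM D) : D 1 = 0 := by
  have := hD 1 1
  simp only [one_mul, mul_one] at this
  have h : D 1 = D 1 + D 1 := this
  have := left_eq_add.mp h
  exact this

/-- For a weak-2-local derivation `Δ` on a unital C*-algebra `A`, every projection `p`,
every `a ∈ A` and every `λ ∈ ℂ`, one has `Δ(a + λp) = Δ(a - λ(1-p))`. -/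
theorem weak2local_add_smul_proj (Δ : A → A) (hΔ : IsWeak2LocalDerivation Δ)
    (p : A) (hp : IsIdempotentElem p) (hps : star p = p) (a : A) (lam : ℂ) :
    Δ (a + lam • p) = Δ (a - lam • (1 - p)) := by
  by_contra h
  obtain ⟨φ, hφ⟩ := SeparatingDual.exists_separating_of_ne (R := ℂ) h
  obtain ⟨D, hD, h1, h2⟩ := hΔ (a + lam • p) (a - lam • (1 - p)) φ
  apply hφ
  rw [h1, h2]
  congr 1
  have hone : D 1 = 0 := derivationCLM_one D hD
  rw [map_add, map_sub, map_smul, map_smul, map_sub, hone]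
  simp
end

section
/- In M_n(ℂ) with standard matrix units, for indices 1 ≤ l,k ≤ n with l ≠ k, let φ = φ_{ln} + φ_{kn}, where φ_{ij} is the functional picking out the (i,j) entry. Then φ([z, p_k a q]) = φ([z, e_{lk} a q]) for all z, a ∈ M_n(ℂ), where q = 1 - p_n and p_k = e_{kk}. -/
open Matrix Finset

/-- The matrix unit `e i j` in `Mₙ(ℂ)`. -/
noncomputable def matrixUnit {n : ℕ} (i j : Fin n) : Matrix (Fin n) (Fin n) ℂ :=
  Matrix.single i j 1

lemma qcol {n : ℕ} (M : Matrix (Fin (n+1)) (Fin (n+1)) ℂ) (j : Fin (n+1)) :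
    (M * (1 - matrixUnit (Fin.last n) (Fin.last n))) j (Fin.last n) = 0 := by
  rw [Matrix.mul_apply]
  apply Finset.sum_eq_zero
  intro c _
  have : (1 - matrixUnit (Fin.last n) (Fin.last n)) c (Fin.last n) = 0 := by
    rcases eq_or_ne c (Fin.last n) with h | h
    · simp [h, matrixUnit, Matrix.sub_apply, Matrix.one_apply]
    · simp [matrixUnit, Matrix.sub_apply, Matrix.one_apply, h, Matrix.single,
        Matrix.of_apply, h.symm]
  rw [this, mul_zero]

lemma unit_mul_apply {n : ℕ} (i k : Fin (n+1)) (M : Matrix (Fin (n+1)) (Fin (n+1)) ℂ)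
    (r c : Fin (n+1)) : (matrixUnit i k * M) r c = if r = i then M k c else 0 := by
  rcases eq_or_ne r i with h | h
  · subst h; simp [matrixUnit]
  · simp [matrixUnit, Matrix.single_mul_apply_of_ne (c := (1 : ℂ)) i k r c h, h]

/-- In `M_{n+1}(ℂ)`, with `p_k = e_{kk}`, `q = 1 - p_n` (where `n` denotes the last index),
and `φ = φ_{ln} + φ_{kn}` for `l ≠ k` (where `φ_{ij}` picks out the `(i,j)` entry), one has
`φ([z, p_k a q]) = φ([z, e_{lk} a q])` for all `z, a`. -/
theorem phi_commutator_pk_aq_eq_elk_aq {n : ℕ} (l k : Fin (n + 1)) (hlk : l ≠ k)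
    (z a : Matrix (Fin (n + 1)) (Fin (n + 1)) ℂ) :
    letI N : Fin (n + 1) := Fin.last n
    letI q : Matrix (Fin (n + 1)) (Fin (n + 1)) ℂ := 1 - matrixUnit N N
    letI φ : Matrix (Fin (n + 1)) (Fin (n + 1)) ℂ → ℂ := fun x => x l N + x k N
    φ (z * (matrixUnit k k * a * q) - (matrixUnit k k * a * q) * z) =
      φ (z * (matrixUnit l k * a * q) - (matrixUnit l k * a * q) * z) := by
  set N : Fin (n + 1) := Fin.last n with hN
  set q : Matrix (Fin (n + 1)) (Fin (n + 1)) ℂ := 1 - matrixUnit N N with hq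
  show (z * (matrixUnit k k * a * q) - (matrixUnit k k * a * q) * z) l N +
      (z * (matrixUnit k k * a * q) - (matrixUnit k k * a * q) * z) k N =
    (z * (matrixUnit l k * a * q) - (matrixUnit l k * a * q) * z) l N +
      (z * (matrixUnit l k * a * q) - (matrixUnit l k * a * q) * z) k N
  have hz : ∀ (i : Fin (n+1)) (e : Matrix (Fin (n+1)) (Fin (n+1)) ℂ),
      (z * (e * a * q)) i N = 0 := by
    intro i e
    rw [Matrix.mul_apply]
    apply Finset.sum_eq_zero
    intro j _
    rw [hq, hN, qcol, mul_zero]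
  have hb : ∀ (i r : Fin (n+1)),
      ((matrixUnit i k * a * q) * z) r N =
        if r = i then ((a * q) * z) k N else 0 := by
    intro i r
    rw [Matrix.mul_apply, Matrix.mul_apply]
    rcases eq_or_ne r i with h | h
    · simp only [h, if_pos rfl]
      apply Finset.sum_congr rfl
      intro j _
      rw [Matrix.mul_assoc, unit_mul_apply, if_pos rfl]
    · simp only [if_neg h]
      apply Finset.sum_eq_zero
      intro j _
      rw [Matrix.mul_assoc, unit_mul_apply, if_neg h, zero_mul]
  simp only [Matrix.sub_apply, hz, hb, if_pos rfl, if_neg hlk, if_neg (Ne.symm hlk)]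
  ring
end

section
/- In M_n(ℂ), let R ⊆ {1,...,n}, set r = Σ_{i∈R} p_i (r = 0 if R is empty), and fix k ∉ R. Let φ = φ_{k1} + φ_{kn}. Then φ([z, r a p_n]) = φ([z, r a e_{n1}]) for all z, a ∈ M_n(ℂ). -/
open Matrix Finset

/-- In `M_{n+1}(ℂ)`, for `R ⊆ {1,…,n+1}`, `r = ∑_{i∈R} p_i`, `k ∉ R`, and
`φ = φ_{k1} + φ_{kn}` (entry functionals at the first and last columns), one has
`φ([z, r a p_n]) = φ([z, r a e_{n1}])` for all `z, a`. -/
theorem phi_commutator_r_a_pn_eq_r_a_en1 {n : ℕ} (R : Finset (Fin (n + 1)))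
    (k : Fin (n + 1)) (hk : k ∉ R) (z a : Matrix (Fin (n + 1)) (Fin (n + 1)) ℂ) :
    letI N : Fin (n + 1) := Fin.last n
    letI r : Matrix (Fin (n + 1)) (Fin (n + 1)) ℂ := ∑ i ∈ R, matrixUnit i i
    letI φ : Matrix (Fin (n + 1)) (Fin (n + 1)) ℂ → ℂ := fun x => x k 0 + x k N
    φ (z * (r * a * matrixUnit N N) - (r * a * matrixUnit N N) * z) =
      φ (z * (r * a * matrixUnit N 0) - (r * a * matrixUnit N 0) * z) := by
  set N := Fin.last n with hN
  set r : Matrix (Fin (n + 1)) (Fin (n + 1)) ℂ := ∑ i ∈ R, matrixUnit i i with hrdef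
  set b := r * a with hbdef
  beta_reduce
  have hr : ∀ m, r k m = 0 := by
    intro m
    rw [hrdef, Matrix.sum_apply]
    refine Finset.sum_eq_zero fun i hi => ?_
    exact Matrix.single_apply_of_row_ne (fun h : i = k => hk (h ▸ hi)) _ _ _
  have hb : ∀ j, b k j = 0 := by
    intro j; simp [hbdef, Matrix.mul_apply, hr]
  have hrow : ∀ (c m : Fin (n+1)), (b * matrixUnit N c) k m = 0 := by
    intro c m
    by_cases h : m = c
    · subst h; simp [matrixUnit, hb]
    · simp only [matrixUnit]
      exact Matrix.mul_single_apply_of_ne (c := 1) N c k m h b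
  have hbz : ∀ (c j : Fin (n+1)), ((b * matrixUnit N c) * z) k j = 0 := by
    intro c j; simp [Matrix.mul_apply, hrow]
  have hz : ∀ (c j : Fin (n+1)), (z * (b * matrixUnit N c)) k j
      = if j = c then (z * b) k N else 0 := by
    intro c j
    rw [← mul_assoc]
    by_cases h : j = c
    · subst h; simp [matrixUnit]
    · simp [matrixUnit, h]
  simp only [Matrix.sub_apply, hz, hbz, sub_zero]
  by_cases h0 : (0 : Fin (n + 1)) = N
  · simp [h0.symm]
  · have h0' : ¬ N = 0 := fun h => h0 h.symm
    simp [h0, h0']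
end

section
/- Let H be a complex Hilbert space and Δ : K(H) → K(H) a weak-2-local *-derivation. Then Δ is a quasi-linear operator on K(H): its restriction to the C*-subalgebra generated by each self-adjoint element is linear, and Δ(a + ib) = Δ(a) + iΔ(b) whenever a, b are self-adjoint. -/
set_option synthInstance.maxHeartbeats 1000000
set_option maxHeartbeats 2000000

variable (H : Type*) [NormedAddCommGroup H] [InnerProductSpace ℂ H] [CompleteSpace H]

/-- The C*-algebra `K(H)` of compact operators on `H`. -/
noncomputable def compactOps : NonUnitalSubalgebra ℂ (H →L[ℂ] H) where
  carrier := {T | IsCompactOperator T}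
  zero_mem' := isCompactOperator_zero
  add_mem' := fun hf hg => hf.add hg
  smul_mem' := fun c T hT => hT.smul c
  mul_mem' := fun {_ g} hf _ => hf.comp_clm g

/-- A (non-necessarily linear) weak-2-local `*`-derivation on `K(H)`: for all `a, b` and
every continuous functional `φ` there is a bounded linear `*`-derivation `D` (a derivation
commuting with the adjoint operation, expressed on the underlying operators) with
`φΔ(a) = φD(a)` and `φΔ(b) = φD(b)`. -/
def IsWeak2LocalStarDerivation
    {H : Type*} [NormedAddCommGroup H] [InnerProductSpace ℂ H] [CompleteSpace H]
    (Δ : compactOps H → compactOps H) : Prop :=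
  ∀ a b : compactOps H, ∀ φ : compactOps H →L[ℂ] ℂ,
    ∃ D : compactOps H →L[ℂ] compactOps H,
      (∀ x y : compactOps H, D (x * y) = D x * y + x * D y) ∧
      (∀ x y : compactOps H, ((y : H →L[ℂ] H) = star (x : H →L[ℂ] H)) →
        ((D y : H →L[ℂ] H) = star ((D x : H →L[ℂ] H)))) ∧
      φ (Δ a) = φ (D a) ∧ φ (Δ b) = φ (D b)

section Aux

open scoped InnerProductSpace ComplexConjugate
open Metric

variable {H}

noncomputable abbrev compactOpsNormedSpace : NormedSpace ℂ (compactOps H) :=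
  SubmoduleClass.toNormedSpace (compactOps H)

attribute [local instance] compactOpsNormedSpace

/-- Schauder's theorem for Hilbert spaces: the adjoint of a compact operator is compact. -/
lemma isCompactOperator_star' {T : H →L[ℂ] H} (hT : IsCompactOperator (T : H →L[ℂ] H)) :
    IsCompactOperator ⇑(star T : H →L[ℂ] H) := by
  classical
  set A : H →L[ℂ] H := star T with hA
  set g : H →L[ℂ] H := T.comp A with hgdef
  have hg : IsCompactOperator ⇑g.toLinearMap := hT.comp_clm A
  have key : ∀ z : H, ‖A z‖ ^ 2 ≤ ‖z‖ * ‖g z‖ := by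
    intro z
    have h1 : ⟪A z, A z⟫_ℂ = ⟪z, T (A z)⟫_ℂ := by
      have : A = ContinuousLinearMap.adjoint T := rfl
      rw [this, ContinuousLinearMap.adjoint_inner_left]
    have h2 : ‖A z‖ ^ 2 = ‖⟪A z, A z⟫_ℂ‖ := by
      rw [inner_self_eq_norm_sq_to_K (𝕜 := ℂ)]
      simp [norm_pow]
    rw [h2, h1]
    exact norm_inner_le_norm _ _
  have htb : TotallyBounded (⇑A '' closedBall (0 : H) 1) := by
    rw [Metric.totallyBounded_iff]
    intro ε hε
    have hK : IsCompact (closure (⇑g.toLinearMap '' closedBall (0 : H) 1)) :=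
      hg.isCompact_closure_image_closedBall 1
    have htbg : TotallyBounded (⇑g '' closedBall (0 : H) 1) :=
      (hK.totallyBounded).subset subset_closure
    obtain ⟨t, htfin, hcov⟩ :=
      (Metric.totallyBounded_iff.mp htbg) (ε ^ 2 / 16) (by positivity)
    have hchoice : ∀ z : H, (⇑g '' closedBall (0:H) 1 ∩ ball z (ε^2/16)).Nonempty →
        ∃ y, y ∈ closedBall (0:H) 1 ∧ g y ∈ ball z (ε^2/16) := by
      rintro z ⟨w, ⟨y, hy, rfl⟩, hw⟩
      exact ⟨y, hy, hw⟩
    set c : H → H := fun z =>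
      if h : (⇑g '' closedBall (0:H) 1 ∩ ball z (ε^2/16)).Nonempty
      then A (hchoice z h).choose else 0 with hc
    refine ⟨c '' t, htfin.image c, ?_⟩
    rintro a ⟨y, hy, rfl⟩
    have hgy : g y ∈ ⋃ z ∈ t, ball z (ε^2/16) := hcov ⟨y, hy, rfl⟩
    simp only [Set.mem_iUnion] at hgy
    obtain ⟨z, hzt, hgyz⟩ := hgy
    have hne : (⇑g '' closedBall (0:H) 1 ∩ ball z (ε^2/16)).Nonempty :=
      ⟨g y, ⟨y, hy, rfl⟩, hgyz⟩
    obtain ⟨hy', hgy'⟩ := (hchoice z hne).choose_spec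
    set y' := (hchoice z hne).choose
    have hcz : c z = A y' := by simp only [hc]; rw [dif_pos hne]
    have hdist : ‖g y - g y'‖ < ε^2/8 := by
      have h1 : ‖g y - z‖ < ε^2/16 := by
        rw [← dist_eq_norm]; exact mem_ball.mp hgyz
      have h2 : ‖g y' - z‖ < ε^2/16 := by
        rw [← dist_eq_norm]; exact mem_ball.mp hgy'
      calc ‖g y - g y'‖ ≤ ‖g y - z‖ + ‖g y' - z‖ := by
            have := norm_sub_le (g y - z) (g y' - z); simpa using this
        _ < ε^2/8 := by linarith
    have hyy' : ‖y - y'‖ ≤ 2 := by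
      have h1 : ‖y‖ ≤ 1 := by simpa using mem_closedBall.mp hy
      have h2 : ‖y'‖ ≤ 1 := by simpa using mem_closedBall.mp hy'
      calc ‖y - y'‖ ≤ ‖y‖ + ‖y'‖ := norm_sub_le _ _
        _ ≤ 2 := by linarith
    have hsq : ‖A y - A y'‖ ^ 2 ≤ 2 * (ε^2/8) := by
      have := key (y - y')
      rw [map_sub, map_sub] at this
      calc ‖A y - A y'‖ ^ 2 ≤ ‖y - y'‖ * ‖g y - g y'‖ := this
        _ ≤ 2 * (ε^2/8) := by
            apply mul_le_mul hyy' hdist.le (norm_nonneg _) (by norm_num)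
    have : ‖A y - A y'‖ < ε := by nlinarith [norm_nonneg (A y - A y')]
    refine Set.mem_biUnion (Set.mem_image_of_mem c hzt) ?_
    rw [hcz, mem_ball, dist_eq_norm]
    exact this
  have hcl : IsCompact (closure (⇑A.toLinearMap '' closedBall (0 : H) 1)) :=
    TotallyBounded.isCompact_of_isClosed htb.closure isClosed_closure
  exact (isCompactOperator_iff_isCompact_closure_image_closedBall
    (f := A.toLinearMap) one_pos).mpr hcl

lemma coeK_add (v w : compactOps H) :
    ((v + w : compactOps H) : H →L[ℂ] H) = (v : H →L[ℂ] H) + w := rfl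

lemma coeK_smul (c : ℂ) (v : compactOps H) :
    ((c • v : compactOps H) : H →L[ℂ] H) = c • (v : H →L[ℂ] H) := rfl

lemma coeK_neg (v : compactOps H) :
    ((-v : compactOps H) : H →L[ℂ] H) = -(v : H →L[ℂ] H) := rfl

lemma coeK_sub (v w : compactOps H) :
    ((v - w : compactOps H) : H →L[ℂ] H) = (v : H →L[ℂ] H) - w := rfl

/-- The star (adjoint) operation on `compactOps H`. -/
noncomputable def starK (z : compactOps H) : compactOps H :=
  ⟨star (z : H →L[ℂ] H), isCompactOperator_star' z.2⟩

@[simp] lemma starK_coe (z : compactOps H) :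
    ((starK z : compactOps H) : H →L[ℂ] H) = star (z : H →L[ℂ] H) := rfl

@[simp] lemma starK_starK (z : compactOps H) : starK (starK z) = z := by
  apply Subtype.ext; simp

lemma starK_add (z w : compactOps H) : starK (z + w) = starK z + starK w := by
  apply Subtype.ext
  show star ((z + w : compactOps H) : H →L[ℂ] H)
    = star (z : H →L[ℂ] H) + star (w : H →L[ℂ] H)
  rw [coeK_add, star_add]

lemma starK_smul (c : ℂ) (z : compactOps H) :
    starK (c • z) = (starRingEnd ℂ c) • starK z := by
  apply Subtype.ext
  show star ((c • z : compactOps H) : H →L[ℂ] H)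
    = (starRingEnd ℂ c) • star (z : H →L[ℂ] H)
  rw [coeK_smul, star_smul]
  rfl

@[simp] lemma starK_norm (z : compactOps H) : ‖starK z‖ = ‖z‖ := by
  show ‖star (z : H →L[ℂ] H)‖ = ‖(z : H →L[ℂ] H)‖
  exact norm_star _

lemma starK_eq_of_sa {v : compactOps H} (hv : IsSelfAdjoint (v : H →L[ℂ] H)) :
    starK v = v := Subtype.ext hv

/-- The conjugate-transpose functional `z ↦ conj (φ (z*))`. -/
noncomputable def conjStarCLM (φ : compactOps H →L[ℂ] ℂ) : compactOps H →L[ℂ] ℂ :=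
  LinearMap.mkContinuous
    { toFun := fun z => starRingEnd ℂ (φ (starK z))
      map_add' := fun z w => by
        show starRingEnd ℂ (φ (starK (z + w))) = _
        rw [starK_add, map_add, map_add]
      map_smul' := fun c z => by
        show starRingEnd ℂ (φ (starK (c • z))) = _
        rw [starK_smul, map_smul, smul_eq_mul, map_mul, RingHom.id_apply]
        simp }
    ‖φ‖ (fun z => by
      simp only [LinearMap.coe_mk, AddHom.coe_mk, RCLike.norm_conj]
      calc ‖φ (starK z)‖ ≤ ‖φ‖ * ‖starK z‖ := φ.le_opNorm _
        _ = ‖φ‖ * ‖z‖ := by rw [starK_norm])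

@[simp] lemma conjStarCLM_apply (φ : compactOps H →L[ℂ] ℂ) (z : compactOps H) :
    conjStarCLM φ z = starRingEnd ℂ (φ (starK z)) := rfl

/-- Symmetric functionals. -/
def IsSymmFunctional (φ : compactOps H →L[ℂ] ℂ) : Prop :=
  ∀ z : compactOps H, φ (starK z) = starRingEnd ℂ (φ z)

/-- Symmetric functionals separate the points of `K(H)`. -/
lemma eq_of_symm_functionals {v w : compactOps H}
    (h : ∀ φ : compactOps H →L[ℂ] ℂ, IsSymmFunctional φ → φ v = φ w) : v = w := by
  apply (NormedSpace.eq_iff_forall_dual_eq ℂ).mpr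
  intro φ
  set ψ := conjStarCLM φ with hψ
  set φ₁ : compactOps H →L[ℂ] ℂ := (2:ℂ)⁻¹ • (φ + ψ) with hφ₁
  set φ₂ : compactOps H →L[ℂ] ℂ := (2*Complex.I)⁻¹ • (φ - ψ) with hφ₂
  have h₁ : IsSymmFunctional φ₁ := by
    intro z
    simp only [hφ₁, hψ, ContinuousLinearMap.smul_apply, ContinuousLinearMap.add_apply,
      conjStarCLM_apply, starK_starK, smul_eq_mul, map_mul, map_add, map_inv₀,
      Complex.conj_conj, map_ofNat]
    ring
  have h₂ : IsSymmFunctional φ₂ := by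
    intro z
    simp only [hφ₂, hψ, ContinuousLinearMap.smul_apply, ContinuousLinearMap.sub_apply,
      conjStarCLM_apply, starK_starK, smul_eq_mul, map_mul, map_sub, map_inv₀,
      Complex.conj_conj, map_ofNat, Complex.conj_I]
    field_simp
    ring
  have key : ∀ z, φ z = φ₁ z + Complex.I * φ₂ z := by
    intro z
    simp only [hφ₁, hφ₂, hψ, ContinuousLinearMap.smul_apply, ContinuousLinearMap.add_apply,
      ContinuousLinearMap.sub_apply, conjStarCLM_apply, smul_eq_mul]
    have hI : Complex.I ≠ 0 := Complex.I_ne_zero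
    field_simp
    ring
  rw [key v, key w, h φ₁ h₁, h φ₂ h₂]

lemma complex_decomp {x y x' y' : ℂ} (h : x + Complex.I * y = x' + Complex.I * y')
    (hx : x.im = 0) (hy : y.im = 0) (hx' : x'.im = 0) (hy' : y'.im = 0) :
    x = x' ∧ y = y' := by
  have hre := congrArg Complex.re h
  have him := congrArg Complex.im h
  simp only [Complex.add_re, Complex.add_im, Complex.mul_re, Complex.mul_im,
    Complex.I_re, Complex.I_im, hx, hy, hx', hy'] at hre him
  constructor
  · exact Complex.ext (by simpa using hre) (by rw [hx, hx'])
  · exact Complex.ext (by simpa using him) (by rw [hy, hy'])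

lemma rotK_id {M : Type*} [AddCommGroup M] [Module ℂ M] (s t : M) :
    (s + t) + Complex.I • (s - t) = (1 + Complex.I) • (s + Complex.I • (-t)) := by
  match_scalars <;> simp [Complex.ext_iff]

/-- Cancellation of self-adjoint decompositions. -/
lemma sa_cancel {p q p' q' : compactOps H}
    (hp : IsSelfAdjoint (p : H →L[ℂ] H)) (hq : IsSelfAdjoint (q : H →L[ℂ] H))
    (hp' : IsSelfAdjoint (p' : H →L[ℂ] H)) (hq' : IsSelfAdjoint (q' : H →L[ℂ] H))
    (h : p + Complex.I • q = p' + Complex.I • q') : p = p' ∧ q = q' := by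
  have hco : (p : H →L[ℂ] H) + Complex.I • (q : H →L[ℂ] H)
      = (p' : H →L[ℂ] H) + Complex.I • (q' : H →L[ℂ] H) := by
    have := congrArg (fun u : compactOps H => (u : H →L[ℂ] H)) h
    simpa [coeK_add, coeK_smul] using this
  set X : H →L[ℂ] H := (p : H →L[ℂ] H) - p' with hX
  set Y : H →L[ℂ] H := (q' : H →L[ℂ] H) - q with hY
  have hXY : X = Complex.I • Y := by
    rw [hX, hY, smul_sub]
    rw [sub_eq_sub_iff_add_eq_add]
    rw [hco]
    abel
  have hXsa : star X = X := by rw [hX, star_sub, hp, hp']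
  have hYsa : star Y = Y := by rw [hY, star_sub, hq, hq']
  have hXneg : X = -X := by
    conv_lhs => rw [← hXsa, hXY, star_smul, hYsa]
    rw [hXY]
    simp [Complex.conj_I, neg_smul]
  have hX0 : X = 0 := by
    have h2 : (2:ℂ) • X = 0 := by
      rw [two_smul]
      nth_rewrite 2 [hXneg]
      simp
    rcases smul_eq_zero.mp h2 with h | h
    · exact absurd h two_ne_zero
    · exact h
  have hY0 : Y = 0 := by
    have := hXY.symm.trans hX0
    rcases smul_eq_zero.mp this with h | h
    · exact absurd h Complex.I_ne_zero
    · exact h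
  constructor
  · exact Subtype.ext (sub_eq_zero.mp hX0)
  · exact (Subtype.ext (sub_eq_zero.mp hY0)).symm

/-- Real part within `K(H)`. -/
noncomputable def reK (z : compactOps H) : compactOps H := (2:ℂ)⁻¹ • (z + starK z)

/-- Imaginary part within `K(H)`. -/
noncomputable def imK (z : compactOps H) : compactOps H := (2*Complex.I)⁻¹ • (z - starK z)

lemma reK_coe (z : compactOps H) : ((reK z : compactOps H) : H →L[ℂ] H)
    = (2:ℂ)⁻¹ • ((z : H →L[ℂ] H) + star (z : H →L[ℂ] H)) := rfl

lemma imK_coe (z : compactOps H) : ((imK z : compactOps H) : H →L[ℂ] H)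
    = (2*Complex.I)⁻¹ • ((z : H →L[ℂ] H) - star (z : H →L[ℂ] H)) := rfl

lemma reK_sa (z : compactOps H) : IsSelfAdjoint ((reK z : compactOps H) : H →L[ℂ] H) := by
  show star _ = _
  rw [reK_coe, star_smul, star_add, star_star, add_comm]
  congr 1
  norm_num [Complex.ext_iff, Complex.star_def]

lemma imK_sa (z : compactOps H) : IsSelfAdjoint ((imK z : compactOps H) : H →L[ℂ] H) := by
  show star _ = _
  rw [imK_coe, star_smul, star_sub, star_star,
    ← neg_sub ((z : H →L[ℂ] H)) (star (z : H →L[ℂ] H)), smul_neg, ← neg_smul]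
  congr 1
  norm_num [Complex.ext_iff, Complex.star_def]

lemma reK_decomp (z : compactOps H) : reK z + Complex.I • imK z = z := by
  apply Subtype.ext
  show ((reK z + Complex.I • imK z : compactOps H) : H →L[ℂ] H) = z
  rw [coeK_add, coeK_smul]
  show (2:ℂ)⁻¹ • ((z : H →L[ℂ] H) + star (z : H →L[ℂ] H))
      + Complex.I • ((2*Complex.I)⁻¹ • ((z : H →L[ℂ] H) - star (z : H →L[ℂ] H))) = _
  match_scalars <;> norm_num [Complex.ext_iff] <;> ring

lemma reK_add (z w : compactOps H) : reK (z + w) = reK z + reK w := by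
  unfold reK
  rw [starK_add]
  rw [← smul_add]
  congr 1
  abel

lemma imK_add (z w : compactOps H) : imK (z + w) = imK z + imK w := by
  unfold imK
  rw [starK_add]
  rw [← smul_add]
  congr 1
  abel

end Aux

/-- Every weak-2-local `*`-derivation `Δ` on `K(H)` is a quasi-linear operator: it is
linear on the C*-subalgebra `K(H)_x` generated by any self-adjoint `x`, and
`Δ(a + i b) = Δ(a) + i Δ(b)` for self-adjoint `a, b`. -/
theorem weak2local_star_derivation_is_quasilinear
    (Δ : compactOps H → compactOps H) (hΔ : IsWeak2LocalStarDerivation Δ) :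
    (∀ x : compactOps H, IsSelfAdjoint ((x : H →L[ℂ] H)) →
      ∀ b ∈ (NonUnitalAlgebra.adjoin ℂ ({x} : Set (compactOps H))).topologicalClosure,
      ∀ c ∈ (NonUnitalAlgebra.adjoin ℂ ({x} : Set (compactOps H))).topologicalClosure,
      ∀ α β : ℂ, Δ (α • b + β • c) = α • Δ b + β • Δ c) ∧
    (∀ a b : compactOps H, IsSelfAdjoint ((a : H →L[ℂ] H)) →
      IsSelfAdjoint ((b : H →L[ℂ] H)) →
      Δ (a + Complex.I • b) = Δ a + Complex.I • Δ b) := by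
  letI : NormedSpace ℂ (compactOps H) := compactOpsNormedSpace
  -- separation by all functionals
  have sep : ∀ v w : compactOps H,
      (∀ φ : compactOps H →L[ℂ] ℂ, φ v = φ w) → v = w :=
    fun v w h => (NormedSpace.eq_iff_forall_dual_eq ℂ).mpr h
  -- homogeneity
  have hom : ∀ (lam : ℂ) (z : compactOps H), Δ (lam • z) = lam • Δ z := by
    intro lam z
    apply sep
    intro φ
    obtain ⟨D, -, -, h1, h2⟩ := hΔ z (lam • z) φ
    calc φ (Δ (lam • z)) = φ (D (lam • z)) := h2
      _ = lam * φ (D z) := by rw [map_smul, map_smul, smul_eq_mul]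
      _ = lam * φ (Δ z) := by rw [h1]
      _ = φ (lam • Δ z) := by rw [map_smul, smul_eq_mul]
  -- symmetric functionals are real on self-adjoint elements
  have symm_real : ∀ (φ : compactOps H →L[ℂ] ℂ), IsSymmFunctional φ →
      ∀ v : compactOps H, IsSelfAdjoint (v : H →L[ℂ] H) →
      starRingEnd ℂ (φ v) = φ v := by
    intro φ hφ v hv
    have := hφ v
    rw [starK_eq_of_sa hv] at this
    exact this.symm
  -- Δ preserves self-adjointness
  have saΔ : ∀ a : compactOps H, IsSelfAdjoint (a : H →L[ℂ] H) →
      IsSelfAdjoint ((Δ a : compactOps H) : H →L[ℂ] H) := by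
    intro a ha
    have hkey : starK (Δ a) = Δ a := by
      apply eq_of_symm_functionals
      intro φ hφ
      obtain ⟨D, -, hst, hD, -⟩ := hΔ a a φ
      have hDa : IsSelfAdjoint ((D a : compactOps H) : H →L[ℂ] H) :=
        (hst a a ha.symm).symm
      have hreal : starRingEnd ℂ (φ (D a)) = φ (D a) := symm_real φ hφ (D a) hDa
      calc φ (starK (Δ a)) = starRingEnd ℂ (φ (Δ a)) := hφ (Δ a)
        _ = starRingEnd ℂ (φ (D a)) := by rw [hD]
        _ = φ (D a) := hreal
        _ = φ (Δ a) := hD.symm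
    exact Subtype.ext_iff.mp hkey
  -- the key identity Δ(a + i b) = Δ(a) + i Δ(b) for self-adjoint a, b
  have part2 : ∀ a b : compactOps H, IsSelfAdjoint (a : H →L[ℂ] H) →
      IsSelfAdjoint (b : H →L[ℂ] H) →
      Δ (a + Complex.I • b) = Δ a + Complex.I • Δ b := by
    intro a b ha hb
    apply eq_of_symm_functionals
    intro φ hφ
    obtain ⟨D₁, -, hst₁, e1, e2⟩ := hΔ (a + Complex.I • b) a φ
    obtain ⟨D₂, -, hst₂, f1, f2⟩ := hΔ (a + Complex.I • b) b φ
    have expand : ∀ D : compactOps H →L[ℂ] compactOps H,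
        φ (D (a + Complex.I • b)) = φ (D a) + Complex.I * φ (D b) := by
      intro D
      rw [map_add, map_smul, map_add, map_smul, smul_eq_mul]
    have real' : ∀ (D : compactOps H →L[ℂ] compactOps H),
        (∀ x y : compactOps H, ((y : H →L[ℂ] H) = star (x : H →L[ℂ] H)) →
          ((D y : H →L[ℂ] H) = star ((D x : H →L[ℂ] H)))) →
        ∀ v : compactOps H, IsSelfAdjoint (v : H →L[ℂ] H) → (φ (D v)).im = 0 := by
      intro D hst v hv
      have hDv : IsSelfAdjoint ((D v : compactOps H) : H →L[ℂ] H) :=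
        (hst v v hv.symm).symm
      exact Complex.conj_eq_iff_im.mp (symm_real φ hφ (D v) hDv)
    have heq : φ (D₁ a) + Complex.I * φ (D₁ b) = φ (D₂ a) + Complex.I * φ (D₂ b) := by
      rw [← expand D₁, ← expand D₂, ← e1, ← f1]
    obtain ⟨-, hb12⟩ := complex_decomp heq (real' D₁ hst₁ a ha) (real' D₁ hst₁ b hb)
      (real' D₂ hst₂ a ha) (real' D₂ hst₂ b hb)
    calc φ (Δ (a + Complex.I • b)) = φ (D₁ a) + Complex.I * φ (D₁ b) := by
          rw [e1, expand D₁]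
      _ = φ (Δ a) + Complex.I * φ (Δ b) := by rw [← e2, hb12, ← f2]
      _ = φ (Δ a + Complex.I • Δ b) := by rw [map_add, map_smul, smul_eq_mul]
  -- additivity on self-adjoint elements
  have add_sa : ∀ s t : compactOps H, IsSelfAdjoint (s : H →L[ℂ] H) →
      IsSelfAdjoint (t : H →L[ℂ] H) → Δ (s + t) = Δ s + Δ t := by
    intro s t hs ht
    have hst : IsSelfAdjoint ((s + t : compactOps H) : H →L[ℂ] H) := by
      rw [coeK_add]; exact hs.add ht
    have hsub : IsSelfAdjoint ((s - t : compactOps H) : H →L[ℂ] H) := by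
      rw [coeK_sub]; exact hs.sub ht
    have hneg : IsSelfAdjoint ((-t : compactOps H) : H →L[ℂ] H) := by
      rw [coeK_neg]; exact ht.neg
    have hnegΔ : Δ (-t) = -Δ t := by
      have h1 : (-t : compactOps H) = (-1 : ℂ) • t := by rw [neg_one_smul]
      rw [h1, hom, neg_one_smul]
    have key1 : Δ ((s + t) + Complex.I • (s - t)) = Δ (s + t) + Complex.I • Δ (s - t) :=
      part2 _ _ hst hsub
    have key2 : Δ ((s + t) + Complex.I • (s - t))
        = (Δ s + Δ t) + Complex.I • (Δ s - Δ t) := by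
      rw [rotK_id s t, hom, part2 s (-t) hs hneg, hnegΔ, rotK_id (Δ s) (Δ t)]
    have h1 : IsSelfAdjoint ((Δ s + Δ t : compactOps H) : H →L[ℂ] H) := by
      rw [coeK_add]; exact (saΔ s hs).add (saΔ t ht)
    have h2 : IsSelfAdjoint ((Δ s - Δ t : compactOps H) : H →L[ℂ] H) := by
      rw [coeK_sub]; exact (saΔ s hs).sub (saΔ t ht)
    exact (sa_cancel (saΔ _ hst) (saΔ _ hsub) h1 h2 (key1.symm.trans key2)).1
  -- the decomposition Δ z = Δ (re z) + i Δ (im z)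
  have decompΔ : ∀ z : compactOps H, Δ z = Δ (reK z) + Complex.I • Δ (imK z) := by
    intro z
    conv_lhs => rw [← reK_decomp z]
    exact part2 _ _ (reK_sa z) (imK_sa z)
  -- full additivity
  have addΔ : ∀ z w : compactOps H, Δ (z + w) = Δ z + Δ w := by
    intro z w
    rw [decompΔ (z + w), reK_add, imK_add,
      add_sa _ _ (reK_sa z) (reK_sa w), add_sa _ _ (imK_sa z) (imK_sa w),
      decompΔ z, decompΔ w, smul_add]
    abel
  refine ⟨?_, fun a b ha hb => part2 a b ha hb⟩
  intro x hx b hb c hc α β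
  rw [addΔ, hom, hom]
end
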